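/- For the maximum-metric test P^{(q)} that picks uniformly among maximizers of a positive metric q(v,y), the distribution Q^{(q)}_{VY}(v,y) = P_{VY}(v,y)·(max_{v'} q(v',y)/q(v,y))/μ' (with μ' the normalizer) achieves equality in the meta-converse: ε̄(P^{(q)}) = α_{ε₁(Q^{(q)}, P^{(q)})}( P_{VY}, Q^{(q)} ). -/

import Mathlib

open scoped Classical
open Finset

/-- Corollary 1: for the maximum-metric test `P^{(q)}` (uniform tie-breaking
among maximizers of a strictly positive metric `q`), the auxiliary distribution
`Q^{(q)}(v,y) = P(v,y) (max_{v'} q(v',y)) / (q(v,y) μ')` achieves equality in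
the meta-converse: `ε̄(P^{(q)}) = α_{ε₁(Q^{(q)},P^{(q)})}(P_{VY}, Q^{(q)})`. -/
theorem stmt_7 {V Y : Type*} [Fintype V] [Fintype Y] [Nonempty V]
    (P : V → Y → ℝ) (hP0 : ∀ v y, 0 ≤ P v y) (hP1 : ∑ v, ∑ y, P v y = 1)
    (q : V → Y → ℝ) (hq : ∀ v y, 0 < q v y)
    -- the maximum-metric test
    (Pq : Y → V → ℝ)
    (hPq : ∀ y v, Pq y v =
      if q v y = (⨆ v', q v' y) then
        ((univ.filter (fun v' : V => q v' y = (⨆ v'', q v'' y))).card : ℝ)⁻¹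
      else 0)
    -- the auxiliary distribution and its normalizer
    (μ' : ℝ) (hμ' : μ' = ∑ v, ∑ y, P v y * ((⨆ v', q v' y) / q v y))
    (Qq : V → Y → ℝ)
    (hQq : ∀ v y, Qq v y = P v y * ((⨆ v', q v' y) / q v y) / μ') :
    1 - ∑ v, ∑ y, P v y * Pq y v =
      sInf {e : ℝ | ∃ T : V → Y → ℝ, (∀ v y, 0 ≤ T v y ∧ T v y ≤ 1) ∧
        (∑ v, ∑ y, Qq v y * T v y) ≤ (∑ v, ∑ y, Qq v y * Pq y v) ∧
        e = ∑ v, ∑ y, P v y * (1 - T v y)} := by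
  classical
  have hbdd : ∀ y : Y, BddAbove (Set.range fun v => q v y) :=
    fun y => Set.Finite.bddAbove (Set.finite_range _)
  have hqM : ∀ v y, q v y ≤ ⨆ v', q v' y := fun v y => le_ciSup (hbdd y) v
  have hMpos : ∀ y, 0 < ⨆ v', q v' y :=
    fun y => lt_of_lt_of_le (hq (Classical.arbitrary V) y) (hqM _ y)
  have hratio : ∀ v y, 1 ≤ (⨆ v', q v' y) / q v y :=
    fun v y => (one_le_div (hq v y)).2 (hqM v y)
  have hμ1 : (1:ℝ) ≤ μ' := by
    rw [hμ', ← hP1]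
    refine Finset.sum_le_sum fun v _ => Finset.sum_le_sum fun y _ => ?_
    nlinarith [hP0 v y, hratio v y]
  have hμpos : (0:ℝ) < μ' := lt_of_lt_of_le one_pos hμ1
  have hμQ : ∀ v y, μ' * Qq v y = P v y * ((⨆ v', q v' y) / q v y) := by
    intro v y; rw [hQq]; field_simp
  have hPq01 : ∀ y v, 0 ≤ Pq y v ∧ Pq y v ≤ 1 := by
    intro y v
    rw [hPq]
    split
    · rename_i h
      have hmem : v ∈ univ.filter (fun v' : V => q v' y = (⨆ v'', q v'' y)) := by
        simp [h]
      have hcard : (1:ℝ) ≤ ((univ.filter (fun v' : V => q v' y = (⨆ v'', q v'' y))).card : ℝ) := by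
        have := Finset.card_pos.2 ⟨v, hmem⟩
        exact_mod_cast this
      exact ⟨by positivity, inv_le_one_of_one_le₀ hcard⟩
    · exact ⟨le_refl 0, zero_le_one⟩
  have hcompute : ∀ T : V → Y → ℝ,
      ∑ v, ∑ y, P v y * (1 - T v y) = 1 - ∑ v, ∑ y, P v y * T v y := by
    intro T
    simp only [mul_sub, mul_one, Finset.sum_sub_distrib]
    rw [hP1]
  -- the key Neyman–Pearson style inequality
  have key : ∀ T : V → Y → ℝ, (∀ v y, 0 ≤ T v y ∧ T v y ≤ 1) →
      (∑ v, ∑ y, Qq v y * T v y) ≤ (∑ v, ∑ y, Qq v y * Pq y v) →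
      ∑ v, ∑ y, P v y * T v y ≤ ∑ v, ∑ y, P v y * Pq y v := by
    intro T hT hTQ
    have hterm : ∀ v y, 0 ≤ (P v y - μ' * Qq v y) * (Pq y v - T v y) := by
      intro v y
      by_cases h : q v y = (⨆ v', q v' y)
      · have h1 : μ' * Qq v y = P v y := by
          rw [hμQ, h, div_self (hMpos y).ne']; ring
        rw [h1]; simp
      · have hPq0 : Pq y v = 0 := by rw [hPq, if_neg h]
        rw [hPq0]
        have h1 : P v y - μ' * Qq v y ≤ 0 := by
          rw [hμQ]; nlinarith [hP0 v y, hratio v y]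
        have h2 : 0 - T v y ≤ 0 := by linarith [(hT v y).1]
        nlinarith
    have hsum : 0 ≤ ∑ v, ∑ y, (P v y - μ' * Qq v y) * (Pq y v - T v y) :=
      Finset.sum_nonneg fun v _ => Finset.sum_nonneg fun y _ => hterm v y
    have hexp : ∑ v, ∑ y, (P v y - μ' * Qq v y) * (Pq y v - T v y)
        = (∑ v, ∑ y, P v y * Pq y v) - (∑ v, ∑ y, P v y * T v y)
          - μ' * (∑ v, ∑ y, Qq v y * Pq y v) + μ' * (∑ v, ∑ y, Qq v y * T v y) := by
      simp only [Finset.mul_sum, ← Finset.sum_sub_distrib, ← Finset.sum_add_distrib]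
      refine Finset.sum_congr rfl fun v _ => Finset.sum_congr rfl fun y _ => ?_
      ring
    rw [hexp] at hsum
    nlinarith [mul_le_mul_of_nonneg_left hTQ (le_of_lt hμpos)]
  -- membership of the target value
  have hmem : (1 - ∑ v, ∑ y, P v y * Pq y v) ∈
      {e : ℝ | ∃ T : V → Y → ℝ, (∀ v y, 0 ≤ T v y ∧ T v y ≤ 1) ∧
        (∑ v, ∑ y, Qq v y * T v y) ≤ (∑ v, ∑ y, Qq v y * Pq y v) ∧
        e = ∑ v, ∑ y, P v y * (1 - T v y)} := by
    exact ⟨fun v y => Pq y v, fun v y => hPq01 y v, le_refl _, by rw [hcompute]⟩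
  have hlb : ∀ e ∈ {e : ℝ | ∃ T : V → Y → ℝ, (∀ v y, 0 ≤ T v y ∧ T v y ≤ 1) ∧
        (∑ v, ∑ y, Qq v y * T v y) ≤ (∑ v, ∑ y, Qq v y * Pq y v) ∧
        e = ∑ v, ∑ y, P v y * (1 - T v y)}, (1 - ∑ v, ∑ y, P v y * Pq y v) ≤ e := by
    rintro e ⟨T, hT, hTQ, rfl⟩
    rw [hcompute]
    have := key T hT hTQ
    linarith
  refine le_antisymm ?_ (csInf_le ⟨_, hlb⟩ hmem)
  exact le_csInf ⟨_, hmem⟩ hlb
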